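/- arXiv:math/0507098 — 4 statements merged into one kernel-verified Lean document; each statement's English description precedes it below -/
import Mathlib

section
/- Let V be a finite-dimensional nonzero complex normed vector space, q ∈ ℂ with 0 < |q| < 1, d ≥ 1, A : V → V a linear automorphism, and c_0, c_1, …, c_{d−1} ∈ ℂ with c_0 ≠ 0. Then the linear map L_n := q^{nd} A^d + c_{d−1} q^{n(d−1)} A^{d−1} + ⋯ + c_1 q^n A + c_0·id is invertible for all but finitely many n ∈ ℤ. -/
open Polynomial

theorem stmt6 (V : Type*) [NormedAddCommGroup V] [NormedSpace ℂ V]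
    [FiniteDimensional ℂ V] [Nontrivial V]
    (q : ℂ) (hq0 : 0 < ‖q‖) (hq1 : ‖q‖ < 1)
    (d : ℕ) (hd : 1 ≤ d) (A : V ≃ₗ[ℂ] V) (c : ℕ → ℂ) (hc0 : c 0 ≠ 0) :
    {n : ℤ | ¬ Function.Bijective (fun v : V =>
        q ^ (n * (d : ℤ)) • (A.toLinearMap ^ d) v +
        ∑ i ∈ Finset.range d, (c i * q ^ (n * (i : ℤ))) • (A.toLinearMap ^ i) v)}.Finite := by
  classical
  set m := Module.finrank ℂ V with hm
  let b : Module.Basis (Fin m) ℂ V := Module.finBasis ℂ V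
  let M : Matrix (Fin m) (Fin m) ℂ := LinearMap.toMatrix b b A.toLinearMap
  -- the linear map as a function of t = q^n
  let L : ℂ → (V →ₗ[ℂ] V) := fun t =>
    t ^ d • A.toLinearMap ^ d + ∑ i ∈ Finset.range d, (c i * t ^ i) • A.toLinearMap ^ i
  -- the determinant as a polynomial
  have hpow : ∀ k : ℕ, LinearMap.toMatrix b b (A.toLinearMap ^ k) = M ^ k := by
    intro k
    induction k with
    | zero => simp [M]
    | succ j ih => rw [pow_succ, pow_succ, LinearMap.toMatrix_mul b, ih]
  let N : Matrix (Fin m) (Fin m) (Polynomial ℂ) :=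
    (X : Polynomial ℂ) ^ d • (M ^ d).map C +
      ∑ i ∈ Finset.range d, (C (c i) * X ^ i) • (M ^ i).map C
  let p : Polynomial ℂ := N.det
  have hmap : ∀ t : ℂ, N.map (Polynomial.evalRingHom t)
      = t ^ d • M ^ d + ∑ i ∈ Finset.range d, (c i * t ^ i) • M ^ i := by
    intro t
    ext i j
    simp only [N, Matrix.map_apply, Matrix.add_apply, Matrix.smul_apply, Finset.sum_apply,
      Matrix.sum_apply, smul_eq_mul, Polynomial.coe_evalRingHom]
    rw [Polynomial.eval_add, Polynomial.eval_finset_sum]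
    simp only [Polynomial.eval_mul, Polynomial.eval_C, Polynomial.eval_pow, Polynomial.eval_X]
  have heval : ∀ t : ℂ, p.eval t
      = (t ^ d • M ^ d + ∑ i ∈ Finset.range d, (c i * t ^ i) • M ^ i).det := by
    intro t
    show (Polynomial.evalRingHom t) p = _
    rw [show p = N.det from rfl, RingHom.map_det, RingHom.mapMatrix_apply, hmap t]
  have hdet : ∀ t : ℂ, LinearMap.det (L t) = p.eval t := by
    intro t
    rw [heval t]
    rw [← LinearMap.det_toMatrix b (L t)]
    congr 1
    simp only [L, map_add, map_smul, map_sum, hpow]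
  have hp0 : p.eval 0 ≠ 0 := by
    rw [heval 0]
    have h1 : (0:ℂ) ^ d • (M:Matrix (Fin m) (Fin m) ℂ) ^ d = 0 := by
      rw [zero_pow (by omega), zero_smul]
    have h2 : ∑ i ∈ Finset.range d, ((c i * (0:ℂ) ^ i) • M ^ i)
        = (c 0) • (1 : Matrix (Fin m) (Fin m) ℂ) := by
      rw [Finset.sum_eq_single 0]
      · simp
      · intro i hi hne
        rw [zero_pow hne, mul_zero, zero_smul]
      · intro h; exact absurd (Finset.mem_range.2 (by omega)) h
    rw [h1, h2, zero_add, Matrix.det_smul, Matrix.det_one, mul_one]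
    exact pow_ne_zero _ hc0
  have hpne : p ≠ 0 := fun h => hp0 (by simp [h])
  have hq : q ≠ 0 := by
    intro h; rw [h] at hq0; simp at hq0
  have hinj : Function.Injective fun n : ℤ => q ^ n := by
    intro a b hab
    have hab' : q ^ a = q ^ b := hab
    have : ‖q‖ ^ a = ‖q‖ ^ b := by
      rw [← norm_zpow, ← norm_zpow, hab']
    exact zpow_right_injective₀ hq0 (ne_of_lt hq1) this
  have hsub : {n : ℤ | ¬ Function.Bijective (fun v : V =>
        q ^ (n * (d : ℤ)) • (A.toLinearMap ^ d) v +
        ∑ i ∈ Finset.range d, (c i * q ^ (n * (i : ℤ))) • (A.toLinearMap ^ i) v)}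
      ⊆ (fun n : ℤ => q ^ n) ⁻¹' {x | p.IsRoot x} := by
    intro n hn
    by_contra hroot
    apply hn
    have hne : p.eval (q ^ n) ≠ 0 := hroot
    have hdetne : LinearMap.det (L (q ^ n)) ≠ 0 := by rw [hdet]; exact hne
    have hbij : Function.Bijective (L (q ^ n)) := by
      have := ((L (q ^ n)).equivOfDetNeZero hdetne).bijective
      have hco : ⇑((L (q ^ n)).equivOfDetNeZero hdetne) = ⇑(L (q ^ n)) := by
        ext v
        simp [LinearMap.equivOfDetNeZero]
      rwa [hco] at this
    have hfun : (fun v : V =>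
        q ^ (n * (d : ℤ)) • (A.toLinearMap ^ d) v +
        ∑ i ∈ Finset.range d, (c i * q ^ (n * (i : ℤ))) • (A.toLinearMap ^ i) v)
        = ⇑(L (q ^ n)) := by
      funext v
      have hz : ∀ i : ℕ, q ^ (n * (i : ℤ)) = (q ^ n) ^ i := by
        intro i
        rw [zpow_mul, zpow_natCast]
      simp [L, LinearMap.add_apply, LinearMap.smul_apply, LinearMap.sum_apply, hz]
    rw [hfun]
    exact hbij
  exact Set.Finite.subset (Set.Finite.preimage hinj.injOn
    (Polynomial.finite_setOf_isRoot hpne)) hsub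
end

section
/- Let q ∈ ℂ with 0 < |q| < 1 and let b : ℤ → ℂ be a finitely supported function. There exists a finitely supported function a : ℤ → ℂ satisfying a(n+1)·q^{n+1} − a(n) = b(n) for all n ∈ ℤ if and only if ∑_{n ∈ ℤ} b(n)·q^{n(n+1)/2} = 0. Moreover, if it exists, the solution a is unique. -/
private lemma exists_bound9 (S : Set ℤ) (hS : S.Finite) :
    ∃ N : ℤ, 0 < N ∧ ∀ m ∈ S, -N < m ∧ m < N := by
  refine ⟨((hS.toFinset.sup (fun n => n.natAbs) : ℕ) : ℤ) + 1, by positivity, ?_⟩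
  intro m hm
  have h : m.natAbs ≤ hS.toFinset.sup (fun n => n.natAbs) :=
    Finset.le_sup (hS.mem_toFinset.mpr hm)
  omega

theorem stmt9 (q : ℂ) (hq0 : 0 < ‖q‖) (hq1 : ‖q‖ < 1)
    (b : ℤ → ℂ) (hb : (Function.support b).Finite) :
    ((∃ a : ℤ → ℂ, (Function.support a).Finite ∧
        ∀ n : ℤ, a (n + 1) * q ^ (n + 1) - a n = b n) ↔
      ∑ᶠ n : ℤ, b n * q ^ (n * (n + 1) / 2) = 0) ∧
    (∀ a₁ a₂ : ℤ → ℂ, (Function.support a₁).Finite → (Function.support a₂).Finite →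
      (∀ n : ℤ, a₁ (n + 1) * q ^ (n + 1) - a₁ n = b n) →
      (∀ n : ℤ, a₂ (n + 1) * q ^ (n + 1) - a₂ n = b n) → a₁ = a₂) := by
  have hq : q ≠ 0 := by
    intro h
    rw [h] at hq0
    simp at hq0
  have hT : ∀ n : ℤ, (n + 1) * ((n + 1) + 1) / 2 = n * (n + 1) / 2 + (n + 1) := by
    intro n
    have h : (n + 1) * ((n + 1) + 1) = n * (n + 1) + 2 * (n + 1) := by ring
    obtain ⟨k, hk⟩ := Int.even_mul_succ_self n
    omega
  have hqT : ∀ n : ℤ, q ^ ((n + 1) * ((n + 1) + 1) / 2)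
      = q ^ (n * (n + 1) / 2) * q ^ (n + 1) := by
    intro n
    rw [hT n, zpow_add₀ hq]
  constructor
  · constructor
    · rintro ⟨a, ha, hrec⟩
      obtain ⟨N, hN0, hN⟩ := exists_bound9 _ (ha.union hb)
      set f : ℤ → ℂ := fun n => a n * q ^ (n * (n + 1) / 2) with hf
      have key : ∀ n : ℤ, b n * q ^ (n * (n + 1) / 2) = f (n + 1) - f n := by
        intro n
        have h1 : f (n + 1) - f n = (a (n + 1) * q ^ (n + 1) - a n) * q ^ (n * (n + 1) / 2) := by
          simp only [hf, hqT n]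
          ring
        rw [h1, hrec n]
      have hsub : Function.support (fun n => b n * q ^ (n * (n + 1) / 2))
          ⊆ ↑(Finset.Ico (-N) N) := by
        intro n hn
        have hbn : b n ≠ 0 := by
          intro h; apply hn; simp [h]
        have := hN n (Or.inr hbn)
        simp only [Finset.coe_Ico, Set.mem_Ico]
        omega
      rw [finsum_eq_finset_sum_of_support_subset _ hsub]
      have hfsub : ∀ n : ℤ, f n ≠ 0 → -N < n ∧ n < N := by
        intro n hn
        have han : a n ≠ 0 := by
          intro h; apply hn; simp [hf, h]
        exact hN n (Or.inl han)
      have e1 : ∑ n ∈ Finset.Ico (-N + 1) (N + 1), f n = ∑ᶠ n, f n := by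
        refine (finsum_eq_finset_sum_of_support_subset _ ?_).symm
        intro n hn
        have := hfsub n hn
        simp only [Finset.coe_Ico, Set.mem_Ico]
        omega
      have e2 : ∑ n ∈ Finset.Ico (-N) N, f n = ∑ᶠ n, f n := by
        refine (finsum_eq_finset_sum_of_support_subset _ ?_).symm
        intro n hn
        have := hfsub n hn
        simp only [Finset.coe_Ico, Set.mem_Ico]
        omega
      have e3 : ∑ n ∈ Finset.Ico (-N) N, f (n + 1) = ∑ n ∈ Finset.Ico (-N + 1) (N + 1), f n := by
        rw [← Finset.map_add_right_Ico (-N) N 1, Finset.sum_map]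
        simp [addRightEmbedding]
      calc ∑ n ∈ Finset.Ico (-N) N, b n * q ^ (n * (n + 1) / 2)
          = ∑ n ∈ Finset.Ico (-N) N, (f (n + 1) - f n) := by
            exact Finset.sum_congr rfl (fun n _ => key n)
        _ = (∑ n ∈ Finset.Ico (-N) N, f (n + 1)) - ∑ n ∈ Finset.Ico (-N) N, f n := by
            rw [Finset.sum_sub_distrib]
        _ = 0 := by rw [e3, e1, e2, sub_self]
    · intro hsum
      obtain ⟨N, hN0, hN⟩ := exists_bound9 _ hb
      set a : ℤ → ℂ := fun n =>
        (∑ m ∈ Finset.Ico (-N) n, b m * q ^ (m * (m + 1) / 2)) * q ^ (-(n * (n + 1) / 2)) with hadef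
      have ha0 : ∀ n : ℤ, n ≤ -N → a n = 0 := by
        intro n hn
        simp [hadef, Finset.Ico_eq_empty_of_le hn]
      have haN : ∀ n : ℤ, N ≤ n → a n = 0 := by
        intro n hn
        have : ∑ m ∈ Finset.Ico (-N) n, b m * q ^ (m * (m + 1) / 2)
            = ∑ᶠ m : ℤ, b m * q ^ (m * (m + 1) / 2) := by
          refine (finsum_eq_finset_sum_of_support_subset _ ?_).symm
          intro m hm
          have hbm : b m ≠ 0 := by
            intro h; apply hm; simp [h]
          have := hN m hbm
          simp only [Finset.coe_Ico, Set.mem_Ico]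
          omega
        simp [hadef, this, hsum]
      refine ⟨a, ?_, ?_⟩
      · refine Set.Finite.subset (Set.finite_Ioo (-N) N) ?_
        intro n hn
        simp only [Set.mem_Ioo]
        by_contra h
        push_neg at h
        rcases le_or_gt n (-N) with h1 | h1
        · exact hn (ha0 n h1)
        · exact hn (haN n (h h1))
      · intro n
        rcases lt_or_ge n (-N) with h1 | h1
        · have hb0 : b n = 0 := by
            by_contra h
            have := hN n h
            omega
          rw [ha0 n (by omega), ha0 (n + 1) (by omega), hb0]
          ring
        · have hsplit : ∑ m ∈ Finset.Ico (-N) (n + 1), b m * q ^ (m * (m + 1) / 2)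
              = (∑ m ∈ Finset.Ico (-N) n, b m * q ^ (m * (m + 1) / 2))
                + b n * q ^ (n * (n + 1) / 2) := by
            have hins : Finset.Ico (-N) (n + 1) = insert n (Finset.Ico (-N) n) := by
              ext m
              simp only [Finset.mem_Ico, Finset.mem_insert]
              omega
            rw [hins, Finset.sum_insert (by simp)]
            ring
          have hstep : q ^ (-((n + 1) * ((n + 1) + 1) / 2)) * q ^ (n + 1)
              = q ^ (-(n * (n + 1) / 2)) := by
            rw [← zpow_add₀ hq, hT n]
            ring_nf
          have hcancel : q ^ (n * (n + 1) / 2) * q ^ (-(n * (n + 1) / 2)) = 1 := by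
            rw [← zpow_add₀ hq]
            simp
          calc a (n + 1) * q ^ (n + 1) - a n
              = (∑ m ∈ Finset.Ico (-N) (n + 1), b m * q ^ (m * (m + 1) / 2))
                  * (q ^ (-((n + 1) * ((n + 1) + 1) / 2)) * q ^ (n + 1)) - a n := by
                simp only [hadef]; ring
            _ = (∑ m ∈ Finset.Ico (-N) n, b m * q ^ (m * (m + 1) / 2))
                  * q ^ (-(n * (n + 1) / 2))
                  + b n * (q ^ (n * (n + 1) / 2) * q ^ (-(n * (n + 1) / 2))) - a n := by
                rw [hstep, hsplit]; ring
            _ = b n := by rw [hcancel, hadef]; ring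
  · intro a₁ a₂ h₁f h₂f h₁ h₂
    by_contra hne
    have hd : ∃ n : ℤ, a₁ n - a₂ n ≠ 0 := by
      by_contra h
      push_neg at h
      exact hne (funext fun n => by have := h n; linear_combination this)
    obtain ⟨n₀, hn₀⟩ := hd
    have hrec : ∀ n : ℤ, a₁ n - a₂ n = (a₁ (n + 1) - a₂ (n + 1)) * q ^ (n + 1) := by
      intro n
      have e1 := h₁ n
      have e2 := h₂ n
      linear_combination e2 - e1
    have hstep : ∀ n : ℤ, a₁ n - a₂ n ≠ 0 → a₁ (n + 1) - a₂ (n + 1) ≠ 0 := by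
      intro n hn h0
      apply hn
      rw [hrec n, h0, zero_mul]
    have hall : ∀ k : ℕ, a₁ (n₀ + k) - a₂ (n₀ + k) ≠ 0 := by
      intro k
      induction k with
      | zero => simpa using hn₀
      | succ k ih =>
        have := hstep (n₀ + k) ih
        have hk : n₀ + (k + 1 : ℕ) = (n₀ + k) + 1 := by push_cast; ring
        rwa [hk]
    have hinf : (Function.support (fun n => a₁ n - a₂ n)).Infinite := by
      apply Set.infinite_of_injective_forall_mem (f := fun k : ℕ => n₀ + (k : ℤ))
      · intro i j hij
        simpa using hij
      · intro k
        exact hall k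
    apply hinf
    apply Set.Finite.subset (h₁f.union h₂f)
    intro n hn
    simp only [Function.mem_support] at hn
    by_contra h
    simp only [Set.mem_union, Function.mem_support, not_or, not_not] at h
    apply hn
    rw [h.1, h.2, sub_self]
end

section
/- Let k be a field and q1 ∈ k* not a root of unity. Let φ ∈ k[[t]] be a formal power series with φ(t) = q1·t + a_2 t^2 + a_3 t^3 + ⋯ (no constant term, linear coefficient q1). Then there exists a formal power series s(t) = t + b_2 t^2 + b_3 t^3 + ⋯ ∈ k[[t]] such that s(φ(t)) = q1·s(t). Moreover such s is unique. -/
/-- Composition `s(φ(t))` of formal power series, valid when `φ` has zero constant term: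
the coefficient of `t^N` is `∑_{j ≤ N} (coeff j s)·(coeff N of φ^j)`. -/
noncomputable def compPS {k : Type*} [CommRing k] (s φ : PowerSeries k) : PowerSeries k :=
  PowerSeries.mk fun N => ∑ j ∈ Finset.range (N + 1),
    PowerSeries.coeff j s * PowerSeries.coeff N (φ ^ j)

private lemma aux_coeff_pow_zero {k : Type*} [CommRing k] {φ : PowerSeries k}
    (h : PowerSeries.coeff 0 φ = 0) {N j : ℕ} (hNj : N < j) :
    PowerSeries.coeff N (φ ^ j) = 0 := by
  have hX : (PowerSeries.X : PowerSeries k) ∣ φ := by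
    rw [PowerSeries.X_dvd_iff]; simpa using h
  exact (PowerSeries.X_pow_dvd_iff.mp (pow_dvd_pow_of_dvd hX j)) N hNj

private lemma aux_coeff_pow_self {k : Type*} [CommRing k] {φ : PowerSeries k} {q1 : k}
    (h0 : PowerSeries.coeff 0 φ = 0) (h1 : PowerSeries.coeff 1 φ = q1) (N : ℕ) :
    PowerSeries.coeff N (φ ^ N) = q1 ^ N := by
  induction N with
  | zero => simp
  | succ N ih =>
    rw [pow_succ', PowerSeries.coeff_mul, Finset.sum_eq_single (1, N)]
    · rw [h1, ih, pow_succ']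
    · rintro ⟨a, b⟩ hp hne
      simp only [Finset.HasAntidiagonal.mem_antidiagonal] at hp
      rcases lt_or_ge b N with hb | hb
      · rw [aux_coeff_pow_zero h0 hb, mul_zero]
      · rcases (by omega : b = N ∨ b = N + 1) with rfl | rfl
        · have ha : a = 1 := by omega
          subst ha
          exact absurd rfl hne
        · have ha : a = 0 := by omega
          subst ha
          simp [h0]
    · intro h
      exact absurd (Finset.HasAntidiagonal.mem_antidiagonal.mpr (by omega)) h

noncomputable def bcoKoenigs {k : Type*} [Field k] (q1 : k) (φ : PowerSeries k) : ℕ → k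
  | 0 => 0
  | 1 => 1
  | (N+2) => (q1 - q1^(N+2))⁻¹ *
      ∑ j ∈ (Finset.range (N+2)).attach,
        bcoKoenigs q1 φ j * PowerSeries.coeff (N+2) (φ ^ (j : ℕ))
  decreasing_by exact Finset.mem_range.mp j.2

private lemma bcoKoenigs_succ_succ {k : Type*} [Field k] (q1 : k) (φ : PowerSeries k) (N : ℕ) :
    bcoKoenigs q1 φ (N+2) = (q1 - q1^(N+2))⁻¹ *
      ∑ j ∈ Finset.range (N+2), bcoKoenigs q1 φ j * PowerSeries.coeff (N+2) (φ ^ j) := by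
  rw [bcoKoenigs]
  congr 1
  exact Finset.sum_attach (Finset.range (N+2))
    (fun j => bcoKoenigs q1 φ j * PowerSeries.coeff (N+2) (φ ^ j))

theorem stmt16 (k : Type*) [Field k] (q1 : k) (hq0 : q1 ≠ 0)
    (hq : ∀ n : ℕ, 0 < n → q1 ^ n ≠ 1)
    (φ : PowerSeries k) (hφ0 : PowerSeries.coeff 0 φ = 0)
    (hφ1 : PowerSeries.coeff 1 φ = q1) :
    ∃! s : PowerSeries k, PowerSeries.coeff 0 s = 0 ∧ PowerSeries.coeff 1 s = 1 ∧
      compPS s φ = q1 • s := by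
  -- nonvanishing of q1 - q1^N for N ≥ 2
  have hne : ∀ N : ℕ, 2 ≤ N → q1 - q1 ^ N ≠ 0 := by
    intro N hN h
    apply hq (N - 1) (by omega)
    have hNe : N = (N - 1) + 1 := by omega
    have h' : q1 ^ N = q1 := (sub_eq_zero.mp h).symm
    rw [hNe, pow_succ] at h'
    have := mul_right_cancel₀ hq0 (h'.trans (one_mul q1).symm)
    exact this
  -- the key relation satisfied by any solution
  have key : ∀ s : PowerSeries k, compPS s φ = q1 • s → ∀ N : ℕ,
      (q1 - q1 ^ N) * PowerSeries.coeff N s =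
        ∑ j ∈ Finset.range N, PowerSeries.coeff j s * PowerSeries.coeff N (φ ^ j) := by
    intro s hs N
    have h := congrArg (PowerSeries.coeff N) hs
    rw [map_smul] at h
    simp only [compPS, PowerSeries.coeff_mk, smul_eq_mul] at h
    rw [Finset.sum_range_succ, aux_coeff_pow_self hφ0 hφ1] at h
    linear_combination -h
  set b := bcoKoenigs q1 φ with hb
  have hb0 : b 0 = 0 := by rw [hb, bcoKoenigs]
  have hb1 : b 1 = 1 := by rw [hb, bcoKoenigs]
  set s : PowerSeries k := PowerSeries.mk b with hsdef
  have hcoeff : ∀ N, PowerSeries.coeff N s = b N := fun N => PowerSeries.coeff_mk N b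
  have hmain : compPS s φ = q1 • s := by
    ext N
    rw [map_smul]
    simp only [compPS, PowerSeries.coeff_mk, smul_eq_mul, hcoeff]
    match N with
    | 0 => simp [hb0]
    | 1 =>
      rw [Finset.sum_range_succ, Finset.sum_range_one, hb0, hb1,
        aux_coeff_pow_self hφ0 hφ1]
      ring
    | (N+2) =>
      rw [Finset.sum_range_succ, aux_coeff_pow_self hφ0 hφ1]
      have hbN := bcoKoenigs_succ_succ q1 φ N
      rw [← hb] at hbN
      have hd : q1 - q1 ^ (N+2) ≠ 0 := hne (N+2) (by omega)
      rw [hbN]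
      field_simp
      ring
  refine ⟨s, ⟨by rw [hcoeff, hb0], by rw [hcoeff, hb1], hmain⟩, ?_⟩
  rintro s' ⟨h0', h1', hs'⟩
  ext N
  induction N using Nat.strong_induction_on with
  | _ N ih =>
    match N with
    | 0 => rw [h0', hcoeff, hb0]
    | 1 => rw [h1', hcoeff, hb1]
    | (N+2) =>
      have hd : q1 - q1 ^ (N+2) ≠ 0 := hne (N+2) (by omega)
      have e1 := key s' hs' (N+2)
      have e2 := key s hmain (N+2)
      rw [Finset.sum_congr rfl (fun j hj => by
        rw [ih j (Finset.mem_range.mp hj)])] at e1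
      exact mul_left_cancel₀ hd (e1.trans e2.symm)
end

section
/- Let q ∈ ℂ with 0 < |q| < 1, let W be a nonzero finite-dimensional complex vector space, A ∈ GL(W), d ∈ ℂ*, and t, n ≥ 1 integers. Consider the space S of finitely supported functions x : ℤ → W and the ℂ-linear operator T : S → S defined by (T x)(k) = q^{(k+t)/n}·A(x(k+t)) − x(k), where q^{1/n} is a fixed n-th root of q. Then T is injective and its cokernel has dimension t·dim W; explicitly, a finitely supported w : ℤ → W lies in the image of T if and only if for every k_0 ∈ {0, 1, …, t−1}, ∑_{s ∈ ℤ} q^{m(k_0,s)}·A^s(w(k_0 + s t)) = 0, where m(k_0, s) = s k_0/n + s(s+1)t/(2n) and q^{m} := (q^{1/n})^{nm}... i.e. q raised to the rational power m via the fixed root. -/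
private lemma esumlem (t k0 j : ℤ) :
    (j+1) * k0 + (j+1) * ((j+1) + 1) * t / 2
      = (j * k0 + j * (j + 1) * t / 2) + (k0 + (j+1)*t) := by
  obtain ⟨c, hc⟩ := Int.even_mul_succ_self j
  obtain ⟨c', hc'⟩ := Int.even_mul_succ_self (j+1)
  have h1 : j * (j+1) * t / 2 = c * t := by
    rw [hc, show (c + c) * t = 2 * (c * t) by ring, Int.mul_ediv_cancel_left _ two_ne_zero]
  have h2 : (j+1) * ((j+1)+1) * t / 2 = c' * t := by
    rw [hc', show (c' + c') * t = 2 * (c' * t) by ring, Int.mul_ediv_cancel_left _ two_ne_zero]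
  have h3 : c' = c + (j + 1) := by
    have h4 : c' + c' = c + c + 2*(j+1) := by linear_combination hc - hc'
    omega
  rw [h1, h2, h3]; ring

private lemma telelem {W : Type*} [AddCommGroup W] (g : ℤ → W) (a : ℤ) :
    ∀ b, a - 1 ≤ b → ∑ s ∈ Finset.Icc a b, (g (s+1) - g s) = g (b+1) - g a := by
  refine Int.le_induction ?_ ?_
  · rw [show a - 1 + 1 = a by ring, Finset.Icc_eq_empty (by omega), Finset.sum_empty, sub_self]
  · intro b hb ih
    have hins : Finset.Icc a (b+1) = insert (b+1) (Finset.Icc a b) := by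
      ext m; simp only [Finset.mem_Icc, Finset.mem_insert]; omega
    rw [hins, Finset.sum_insert (by simp only [Finset.mem_Icc]; omega), ih]
    abel

private lemma zpow_apply_add {W : Type*} [AddCommGroup W] [Module ℂ W]
    (A : W ≃ₗ[ℂ] W) (a b : ℤ) (y : W) : (A ^ (a+b)) y = (A ^ a) ((A ^ b) y) := by
  rw [zpow_add]; rfl

private lemma zpow_apply_cancel {W : Type*} [AddCommGroup W] [Module ℂ W]
    (A : W ≃ₗ[ℂ] W) (a : ℤ) (y : W) : (A ^ (-a)) ((A ^ a) y) = y := by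
  rw [← zpow_apply_add, neg_add_cancel, zpow_zero]; rfl

private lemma bound_of_finite {W : Type*} [AddCommGroup W] {x : ℤ → W}
    (h : (Function.support x).Finite) :
    ∃ m : ℤ, 0 ≤ m ∧ ∀ k, x k ≠ 0 → -m ≤ k ∧ k ≤ m := by
  obtain ⟨a, ha⟩ := h.bddBelow
  obtain ⟨b, hb⟩ := h.bddAbove
  refine ⟨|a| + |b|, by positivity, fun k hk => ?_⟩
  have h1 := ha hk
  have h2 := hb hk
  have := neg_abs_le a
  have := le_abs_self b
  have := abs_nonneg a
  have := abs_nonneg b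
  constructor <;> linarith

private lemma sboundlem (s t k0 M : ℤ) (ht : 1 ≤ t) (hk0 : 0 ≤ k0) (hk1 : k0 < t)
    (h1 : -M ≤ k0 + s*t) (h2 : k0 + s*t ≤ M) : -(M+t) ≤ s ∧ s ≤ M+t := by
  rcases le_or_gt 0 s with hs|hs
  · have h3 : s*1 ≤ s*t := mul_le_mul_of_nonneg_left ht hs
    constructor <;> nlinarith
  · have h3 : s*t ≤ s*1 := mul_le_mul_of_nonpos_left ht (le_of_lt hs)
    constructor <;> nlinarith

private lemma notin_lem (s t k0 : ℤ) (ht : 1 ≤ t) (hk0 : 0 ≤ k0) (hk1 : k0 < t)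
    (hs : s ≠ 0) : ¬(0 ≤ k0 + s * t ∧ k0 + s * t < t) := by
  rcases lt_or_gt_of_ne hs with h | h
  · have h3 : s * t ≤ -1 * t := mul_le_mul_of_nonneg_right (by omega) (by omega)
    rintro ⟨h4, h5⟩; linarith
  · have h3 : 1 * t ≤ s * t := mul_le_mul_of_nonneg_right (by omega) (by omega)
    rintro ⟨h4, h5⟩; linarith




theorem stmt18 (q qn d : ℂ) (hq0 : 0 < ‖q‖) (hq1 : ‖q‖ < 1)
    (hd : d ≠ 0)
    (W : Type*) [AddCommGroup W] [Module ℂ W] [FiniteDimensional ℂ W] [Nontrivial W]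
    (A : W ≃ₗ[ℂ] W) (t n : ℕ) (ht : 1 ≤ t) (hn : 1 ≤ n) (hqn : qn ^ n = q) :
    -- injectivity of T on finitely supported functions
    (∀ x : ℤ → W, (Function.support x).Finite →
      (∀ k : ℤ, qn ^ (k + (t : ℤ)) • A (x (k + (t : ℤ))) - x k = 0) → x = 0) ∧
    -- characterization of the image of T
    (∀ w : ℤ → W, (Function.support w).Finite →
      ((∃ x : ℤ → W, (Function.support x).Finite ∧
          ∀ k : ℤ, qn ^ (k + (t : ℤ)) • A (x (k + (t : ℤ))) - x k = w k) ↔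
        ∀ k0 : ℤ, 0 ≤ k0 → k0 < (t : ℤ) →
          ∑ᶠ s : ℤ, qn ^ (s * k0 + s * (s + 1) * (t : ℤ) / 2) • ((A ^ s) (w (k0 + s * t))) = 0)) ∧
    -- the conditions cut out a space of dimension t·dim W: the condition map is surjective
    (∀ v : Fin t → W, ∃ w : ℤ → W, (Function.support w).Finite ∧
      ∀ k0 : Fin t,
        ∑ᶠ s : ℤ, qn ^ (s * (k0 : ℤ) + s * (s + 1) * (t : ℤ) / 2) •
          ((A ^ s) (w ((k0 : ℤ) + s * t))) = v k0) := by
  have htz : (1:ℤ) ≤ (t:ℤ) := by exact_mod_cast ht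
  have hq : q ≠ 0 := by intro h; rw [h] at hq0; simp at hq0
  have hqn0 : qn ≠ 0 := by intro h; apply hq; rw [← hqn, h]; exact zero_pow (by omega)
  refine ⟨?_, ?_, ?_⟩
  · -- injectivity
    intro x hx hrel
    by_contra hne
    obtain ⟨k, hk⟩ := Function.ne_iff.mp hne
    have step : ∀ m : ℤ, x m ≠ 0 → x (m + t) ≠ 0 := by
      intro m hm h0
      apply hm
      have h1 := hrel m
      rw [h0] at h1
      simpa using h1
    have mem : ∀ j : ℕ, x (k + (j:ℤ) * t) ≠ 0 := by
      intro j
      induction j with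
      | zero => simpa using hk
      | succ i ih =>
        have h2 := step _ ih
        convert h2 using 2
        push_cast
        ring
    refine (Set.infinite_of_injective_forall_mem
      (f := fun j : ℕ => k + (j:ℤ) * (t:ℤ)) ?_ (fun j => mem j)) hx
    intro a b hab
    simp only [add_right_inj] at hab
    have : (a:ℤ) = b := mul_right_cancel₀ (by omega) hab
    exact_mod_cast this
  · -- image characterization
    intro w hw
    obtain ⟨M, hM0, hM⟩ := bound_of_finite hw
    set B : ℤ := M + t with hB
    have hB0 : 0 ≤ B := by omega
    have husupp : ∀ k0 : ℤ, 0 ≤ k0 → k0 < t → ∀ s : ℤ,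
        qn ^ (s * k0 + s * (s + 1) * (t:ℤ) / 2) • ((A ^ s) (w (k0 + s * t))) ≠ 0 →
        -B ≤ s ∧ s ≤ B := by
      intro k0 h0 h1 s hs
      have hw0 : w (k0 + s*t) ≠ 0 := by
        intro h; apply hs; rw [h]; simp
      have h2 := hM _ hw0
      exact sboundlem s t k0 M htz h0 h1 h2.1 h2.2
    constructor
    · -- forward
      rintro ⟨x, hxfin, hxw⟩ k0 h0 h1
      obtain ⟨N, hN0, hN⟩ := bound_of_finite hxfin
      set C : ℤ := B + N + t + 1 with hC
      have hC0 : 0 ≤ C := by omega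
      have hsub : (Function.support fun s : ℤ =>
          qn ^ (s * k0 + s * (s + 1) * (t:ℤ) / 2) • ((A ^ s) (w (k0 + s * t))))
          ⊆ ↑(Finset.Icc (-C) C) := by
        intro s hs
        have h2 := husupp k0 h0 h1 s hs
        simp only [Finset.coe_Icc, Set.mem_Icc]
        omega
      rw [finsum_eq_finset_sum_of_support_subset _ hsub]
      have hterm : ∀ s : ℤ,
          qn ^ (s * k0 + s * (s + 1) * (t:ℤ) / 2) • ((A ^ s) (w (k0 + s * t)))
          = (fun s : ℤ => qn ^ (s * k0 + s * (s + 1) * (t:ℤ) / 2) • ((A ^ s) (x (k0 + s * t)))) (s+1)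
            - (fun s : ℤ => qn ^ (s * k0 + s * (s + 1) * (t:ℤ) / 2) • ((A ^ s) (x (k0 + s * t)))) s := by
        intro s
        simp only
        have e1 : (s+1) * k0 + (s+1)*((s+1)+1)*(t:ℤ)/2 = (s*k0 + s*(s+1)*t/2) + (k0 + s*t + t) := by
          rw [esumlem t k0 s]; ring
        have e2 : k0 + (s+1)*(t:ℤ) = k0 + s*t + t := by ring
        have e3 : qn ^ (s*k0 + s*(s+1)*(t:ℤ)/2 + (k0 + s*t + t)) =
            qn ^ (s*k0 + s*(s+1)*(t:ℤ)/2) * qn ^ (k0 + s*(t:ℤ) + t) := zpow_add₀ hqn0 _ _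
        rw [e1, e2, e3, zpow_apply_add A s 1, zpow_one, ← hxw (k0 + s*t)]
        rw [map_sub, map_smul, smul_sub, smul_smul]
      have htel := telelem (fun s : ℤ =>
        qn ^ (s * k0 + s * (s + 1) * (t:ℤ) / 2) • ((A ^ s) (x (k0 + s * t)))) (-C) C (by omega)
      rw [Finset.sum_congr rfl (fun s _ => hterm s), htel]
      have hx1 : x (k0 + (C+1)*t) = 0 := by
        by_contra h
        have h2 := (hN _ h).2
        have h3 : (C+1)*1 ≤ (C+1)*t := mul_le_mul_of_nonneg_left htz (by omega)
        linarith
      have hx2 : x (k0 + (-C)*t) = 0 := by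
        by_contra h
        have h2 := (hN _ h).1
        have h3 : C*1 ≤ C*t := mul_le_mul_of_nonneg_left htz hC0
        have h4 : (-C)*(t:ℤ) = -(C*t) := by ring
        rw [h4] at h2
        linarith
      simp only [hx1, hx2, map_zero, smul_zero, sub_zero, sub_self]
    · -- backward
      intro hc
      have hu0 : ∀ k0 : ℤ, 0 ≤ k0 → k0 < (t:ℤ) → ∀ s : ℤ, ¬(-B ≤ s ∧ s ≤ B) →
          qn ^ (s * k0 + s * (s + 1) * (t:ℤ) / 2) • ((A ^ s) (w (k0 + s * t))) = 0 := by
        intro k0 h0 h1 s hs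
        by_contra h2
        exact hs (husupp k0 h0 h1 s h2)
      set F : ℤ → ℤ → W := fun k0 j => ∑ s ∈ Finset.Icc j B,
        qn ^ (s * k0 + s * (s + 1) * (t:ℤ) / 2) • ((A ^ s) (w (k0 + s * t))) with hFdef
      have hFrec : ∀ k0 : ℤ, 0 ≤ k0 → k0 < (t:ℤ) → ∀ j : ℤ, F k0 j =
          qn ^ (j * k0 + j * (j + 1) * (t:ℤ) / 2) • ((A ^ j) (w (k0 + j * t))) + F k0 (j+1) := by
        intro k0 h0 h1 j
        rcases le_or_gt j B with hj | hj
        · have hins : Finset.Icc j B = insert j (Finset.Icc (j+1) B) := by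
            ext m2
            simp only [Finset.mem_Icc, Finset.mem_insert]
            omega
          simp only [hFdef]
          rw [hins, Finset.sum_insert (by simp only [Finset.mem_Icc]; omega)]
        · have h2 := hu0 k0 h0 h1 j (by omega)
          simp only [hFdef]
          rw [Finset.Icc_eq_empty (by omega : ¬ j ≤ B),
            Finset.Icc_eq_empty (by omega : ¬ j + 1 ≤ B), Finset.sum_empty, h2]
          simp
      have hFtop : ∀ k0 j : ℤ, B < j → F k0 j = 0 := by
        intro k0 j hj
        simp only [hFdef]
        rw [Finset.Icc_eq_empty (by omega), Finset.sum_empty]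
      have hFbot : ∀ k0 : ℤ, 0 ≤ k0 → k0 < (t:ℤ) → ∀ j, j ≤ -B → F k0 j = 0 := by
        intro k0 h0 h1 j hj
        have hsub2 : Finset.Icc (-B) B ⊆ Finset.Icc j B := fun m2 hm2 => by
          simp only [Finset.mem_Icc] at *
          omega
        have h5 : F k0 j = ∑ s ∈ Finset.Icc (-B) B,
            qn ^ (s * k0 + s * (s + 1) * (t:ℤ) / 2) • ((A ^ s) (w (k0 + s * t))) := by
          simp only [hFdef]
          exact (Finset.sum_subset hsub2 (fun m2 hm2 hm3 => hu0 k0 h0 h1 m2 (by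
            simp only [Finset.mem_Icc] at hm2 hm3
            omega))).symm
        have h6 := hc k0 h0 h1
        rw [finsum_eq_finset_sum_of_support_subset _ (s := Finset.Icc (-B) B) (by
          intro s hs
          have h7 := husupp k0 h0 h1 s hs
          simp only [Finset.coe_Icc, Set.mem_Icc]
          omega)] at h6
        rw [h5, h6]
      refine ⟨fun k => qn ^ (-(k / (t:ℤ) * (k % (t:ℤ)) + k / (t:ℤ) * (k / (t:ℤ) + 1) * (t:ℤ) / 2)) •
          ((A ^ (-(k / (t:ℤ)))) (- F (k % (t:ℤ)) (k / (t:ℤ)))), ?_, ?_⟩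
      · apply Set.Finite.subset (Set.finite_Icc (-(B*(t:ℤ)) - t) (B*(t:ℤ) + t))
        intro k hk
        simp only [Function.mem_support] at hk
        have hFk : F (k % (t:ℤ)) (k / (t:ℤ)) ≠ 0 := by
          intro h2
          apply hk
          rw [h2]
          simp
        have hj1 : k / (t:ℤ) ≤ B := by
          by_contra h2
          exact hFk (hFtop _ _ (by omega))
        have hm0 : 0 ≤ k % (t:ℤ) := Int.emod_nonneg k (by omega)
        have hm1 : k % (t:ℤ) < t := Int.emod_lt_of_pos k (by omega)
        have hj2 : -B < k / (t:ℤ) := by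
          by_contra h2
          exact hFk (hFbot _ hm0 hm1 _ (by omega))
        have hkeq : (t:ℤ) * (k / t) + k % t = k := Int.mul_ediv_add_emod k t
        have hb1 : (t:ℤ) * (k / t) ≤ t * B := mul_le_mul_of_nonneg_left hj1 (by omega)
        have hb2 : (t:ℤ) * (-B) ≤ t * (k / t) := mul_le_mul_of_nonneg_left (by omega) (by omega)
        simp only [Set.mem_Icc]
        constructor <;> nlinarith
      · intro k
        have hm0 : 0 ≤ k % (t:ℤ) := Int.emod_nonneg k (by omega)
        have hm1 : k % (t:ℤ) < t := Int.emod_lt_of_pos k (by omega)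
        have hkeq : (t:ℤ) * (k / t) + k % t = k := Int.mul_ediv_add_emod k t
        have hmod : (k + (t:ℤ)) % t = k % t := by
          conv_lhs => rw [show k + (t:ℤ) = k + t * 1 by ring]
          exact Int.add_mul_emod_self_left k (t:ℤ) 1
        have hdiv : (k + (t:ℤ)) / t = k / t + 1 := by
          rw [show k + (t:ℤ) = k + 1 * t by ring]
          exact Int.add_mul_ediv_right k 1 (by omega)
        beta_reduce
        rw [hmod, hdiv]
        set j := k / (t:ℤ) with hjdef
        set m := k % (t:ℤ) with hmdef
        have hA1 : ∀ y : W, A ((A ^ (-(j+1))) y) = (A ^ (-j)) y := by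
          intro y
          have h2 := zpow_apply_add A 1 (-(j+1)) y
          rw [show (1:ℤ) + -(j+1) = -j by ring, zpow_one] at h2
          exact h2.symm
        have he : qn ^ (k + (t:ℤ)) * qn ^ (-((j+1) * m + (j+1)*(j+1+1)*(t:ℤ)/2))
            = qn ^ (-(j * m + j*(j+1)*(t:ℤ)/2)) := by
          rw [← zpow_add₀ hqn0]
          congr 1
          have h3 := esumlem t m j
          linarith
        rw [map_smul, hA1, smul_smul, he, ← smul_sub, ← map_sub]
        have hd2 : -F m (j+1) - -F m j
            = qn ^ (j * m + j * (j + 1) * (t:ℤ) / 2) • ((A ^ j) (w (m + j * t))) := by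
          rw [hFrec m hm0 hm1 j]
          abel
        rw [hd2, map_smul, zpow_apply_cancel, smul_smul, ← zpow_add₀ hqn0, neg_add_cancel,
          zpow_zero, one_smul, show m + j * (t:ℤ) = k from by linarith]
  · -- surjectivity of condition map
    intro v
    classical
    refine ⟨fun k => if h : 0 ≤ k ∧ k < (t:ℤ) then v ⟨k.toNat, by omega⟩ else 0, ?_, ?_⟩
    · apply Set.Finite.subset (Set.finite_Icc (0:ℤ) t)
      intro k hk
      simp only [Function.mem_support] at hk
      by_contra h
      simp only [Set.mem_Icc] at h
      exact hk (dif_neg (by omega))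
    · intro k0
      have hk0a : (0:ℤ) ≤ (k0:ℤ) := by positivity
      have hk0b : (k0:ℤ) < t := by exact_mod_cast k0.isLt
      rw [finsum_eq_single _ 0 ?_]
      · norm_num
      · intro s hs
        have h2 := notin_lem s t ((k0:ℕ):ℤ) htz hk0a hk0b hs
        simp only [dif_neg h2, map_zero, smul_zero]
end
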